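/- For increasing functions f, g : ℕ → ℝ and (X₁,X₂) ~ BDsIW(θ₁,θ₂,θ₃,ζ) with f(X₁), g(X₂) having finite second moments, Cov(f(X₁), g(X₂)) ≥ 0. -/

import Mathlib

open MeasureTheory ProbabilityTheory Filter Real Set

/-- CDF of the discrete inverse Weibull distribution: `F(x;θ,ζ) = θ^((x+1)^(-ζ))`. -/
noncomputable def dsiwCDF (θ ζ : ℝ) (x : ℕ) : ℝ := θ ^ (((x : ℝ) + 1) ^ (-ζ))

/-- `θ^(x^(-ζ))` with the convention `θ^(0^(-ζ)) = 0`. -/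
noncomputable def dsiwC (θ ζ : ℝ) (x : ℕ) : ℝ := if x = 0 then 0 else θ ^ ((x : ℝ) ^ (-ζ))

/-- PMF of the discrete inverse Weibull distribution. -/
noncomputable def dsiwPMF (θ ζ : ℝ) (x : ℕ) : ℝ := dsiwCDF θ ζ x - dsiwC θ ζ x


/-- For increasing functions `f, g : ℕ → ℝ` and `(X₁,X₂) ~ BDsIW(θ₁,θ₂,θ₃,ζ)` with
`f(X₁)`, `g(X₂)` square-integrable, `Cov(f(X₁), g(X₂)) ≥ 0`. -/
theorem bdsiw_cov_nonneg {Ω : Type*} [MeasurableSpace Ω] (μ : Measure Ω)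
    [IsProbabilityMeasure μ] (θ : Fin 3 → ℝ) (ζ : ℝ)
    (hθ : ∀ i, θ i ∈ Set.Ioo (0:ℝ) 1) (hζ : 0 < ζ)
    (W : Fin 3 → Ω → ℕ) (hW : ∀ i, Measurable (W i))
    (hindep : iIndepFun W μ)
    (hcdf : ∀ i x, μ {ω | W i ω ≤ x} = ENNReal.ofReal (dsiwCDF (θ i) ζ x))
    (f g : ℕ → ℝ) (hf : Monotone f) (hg : Monotone g)
    (hf2 : MemLp (fun ω => f (max (W 0 ω) (W 2 ω))) 2 μ)
    (hg2 : MemLp (fun ω => g (max (W 1 ω) (W 2 ω))) 2 μ) :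
    0 ≤ ∫ ω, f (max (W 0 ω) (W 2 ω)) * g (max (W 1 ω) (W 2 ω)) ∂μ
        - (∫ ω, f (max (W 0 ω) (W 2 ω)) ∂μ) * ∫ ω, g (max (W 1 ω) (W 2 ω)) ∂μ := by
  classical
  set ν0 : Measure ℕ := μ.map (W 0) with hν0def
  set ν1 : Measure ℕ := μ.map (W 1) with hν1def
  set ν2 : Measure ℕ := μ.map (W 2) with hν2def
  have hp0 : IsProbabilityMeasure ν0 := Measure.isProbabilityMeasure_map (hW 0).aemeasurable
  have hp1 : IsProbabilityMeasure ν1 := Measure.isProbabilityMeasure_map (hW 1).aemeasurable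
  have hp2 : IsProbabilityMeasure ν2 := Measure.isProbabilityMeasure_map (hW 2).aemeasurable
  set F : Ω → ℝ := fun ω => f (max (W 0 ω) (W 2 ω)) with hFdef
  set G : Ω → ℝ := fun ω => g (max (W 1 ω) (W 2 ω)) with hGdef
  have hFi : Integrable F μ := hf2.integrable one_le_two
  have hGi : Integrable G μ := hg2.integrable one_le_two
  have hFGi : Integrable (fun ω => F ω * G ω) μ := by
    have h := hg2.smul (φ := F) hf2 (r := 1)
      (hpqr := ⟨by norm_num [ENNReal.inv_two_add_inv_two]⟩)
    have h2 := memLp_one_iff_integrable.mp h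
    exact (by simpa [smul_eq_mul] using h2 : Integrable (F * G) μ)
  -- integrability of single components
  have comp_int : ∀ (h : ℕ → ℝ), Monotone h → ∀ (Z : Ω → ℕ), Measurable Z → ∀ (H : Ω → ℝ),
      Integrable H μ → (∀ ω, h (Z ω) ≤ H ω) → Integrable (fun ω => h (Z ω)) μ := by
    intro h hm Z hZ H hHi hb
    refine Integrable.mono' (g := fun ω => |H ω| + |h 0|) (hHi.abs.add (integrable_const |h 0|))
      ((measurable_of_countable h).comp hZ).aestronglyMeasurable
      (Eventually.of_forall fun ω => ?_)
    rw [Real.norm_eq_abs, abs_le]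
    constructor
    · show -(|H ω| + |h 0|) ≤ h (Z ω)
      have h1 : h 0 ≤ h (Z ω) := hm (Nat.zero_le _)
      have h2 : -|h 0| ≤ h 0 := neg_abs_le _
      have h3 : (0:ℝ) ≤ |H ω| := abs_nonneg _
      linarith
    · show h (Z ω) ≤ |H ω| + |h 0|
      have h1 := hb ω
      have h2 : H ω ≤ |H ω| := le_abs_self _
      have h3 : (0:ℝ) ≤ |h 0| := abs_nonneg _
      linarith
  have hfW0 : Integrable (fun ω => f (W 0 ω)) μ :=
    comp_int f hf (W 0) (hW 0) F hFi (fun ω => hf (le_max_left _ _))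
  have hgW1 : Integrable (fun ω => g (W 1 ω)) μ :=
    comp_int g hg (W 1) (hW 1) G hGi (fun ω => hg (le_max_left _ _))
  have hfν0 : Integrable f ν0 :=
    (integrable_map_measure (measurable_of_countable f).aestronglyMeasurable
      (hW 0).aemeasurable).mpr hfW0
  have hgν1 : Integrable g ν1 :=
    (integrable_map_measure (measurable_of_countable g).aestronglyMeasurable
      (hW 1).aemeasurable).mpr hgW1
  -- per-c integrability
  have hIf : ∀ c, Integrable (fun a => max (f a) (f c)) ν0 := by
    intro c
    refine Integrable.mono' (g := fun a => |f a| + |f c|) (hfν0.abs.add (integrable_const |f c|))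
      (measurable_of_countable _).aestronglyMeasurable (Eventually.of_forall fun a => ?_)
    rw [Real.norm_eq_abs]
    calc |max (f a) (f c)| ≤ max |f a| |f c| := abs_max_le_max_abs_abs
      _ ≤ |f a| + |f c| :=
        max_le (le_add_of_nonneg_right (abs_nonneg _)) (le_add_of_nonneg_left (abs_nonneg _))
  have hIg : ∀ c, Integrable (fun b => max (g b) (g c)) ν1 := by
    intro c
    refine Integrable.mono' (g := fun b => |g b| + |g c|) (hgν1.abs.add (integrable_const |g c|))
      (measurable_of_countable _).aestronglyMeasurable (Eventually.of_forall fun b => ?_)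
    rw [Real.norm_eq_abs]
    calc |max (g b) (g c)| ≤ max |g b| |g c| := abs_max_le_max_abs_abs
      _ ≤ |g b| + |g c| :=
        max_le (le_add_of_nonneg_right (abs_nonneg _)) (le_add_of_nonneg_left (abs_nonneg _))
  set A : ℕ → ℝ := fun c => ∫ a, max (f a) (f c) ∂ν0 with hAdef
  set B : ℕ → ℝ := fun c => ∫ b, max (g b) (g c) ∂ν1 with hBdef
  have hAmono : Monotone A := fun c c' hcc =>
    integral_mono (hIf c) (hIf c') (fun a => max_le_max le_rfl (hf hcc))
  have hBmono : Monotone B := fun c c' hcc =>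
    integral_mono (hIg c) (hIg c') (fun b => max_le_max le_rfl (hg hcc))
  -- joint laws
  have h01 : IndepFun (W 0) (W 1) μ := hindep.indepFun (by decide)
  have h02 : IndepFun (W 0) (W 2) μ := hindep.indepFun (by decide)
  have h12 : IndepFun (W 1) (W 2) μ := hindep.indepFun (by decide)
  have hpair : IndepFun (fun ω => (W 0 ω, W 1 ω)) (W 2) μ :=
    hindep.indepFun_prodMk hW 0 1 2 (by decide) (by decide)
  have hmap01 : μ.map (fun ω => (W 0 ω, W 1 ω)) = ν0.prod ν1 :=
    (indepFun_iff_map_prod_eq_prod_map_map (hW 0).aemeasurable (hW 1).aemeasurable).mp h01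
  have hmap02 : μ.map (fun ω => (W 0 ω, W 2 ω)) = ν0.prod ν2 :=
    (indepFun_iff_map_prod_eq_prod_map_map (hW 0).aemeasurable (hW 2).aemeasurable).mp h02
  have hmap12 : μ.map (fun ω => (W 1 ω, W 2 ω)) = ν1.prod ν2 :=
    (indepFun_iff_map_prod_eq_prod_map_map (hW 1).aemeasurable (hW 2).aemeasurable).mp h12
  have hmapT : μ.map (fun ω => ((W 0 ω, W 1 ω), W 2 ω)) = (ν0.prod ν1).prod ν2 := by
    rw [(indepFun_iff_map_prod_eq_prod_map_map
      (((hW 0).prodMk (hW 1))).aemeasurable (hW 2).aemeasurable).mp hpair, hmap01]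
  have hT : Measurable (fun ω => ((W 0 ω, W 1 ω), W 2 ω)) :=
    ((hW 0).prodMk (hW 1)).prodMk (hW 2)
  set H : (ℕ × ℕ) × ℕ → ℝ := fun p => max (f p.1.1) (f p.2) * max (g p.1.2) (g p.2) with hHdef
  have hHcomp : (fun ω => H ((W 0 ω, W 1 ω), W 2 ω)) = fun ω => F ω * G ω := by
    funext ω
    simp only [hHdef, hFdef, hGdef, hf.map_max, hg.map_max]
  have hHint : Integrable H ((ν0.prod ν1).prod ν2) := by
    rw [← hmapT,
      integrable_map_measure (measurable_of_countable H).aestronglyMeasurable hT.aemeasurable]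
    show Integrable (fun ω => H ((W 0 ω, W 1 ω), W 2 ω)) μ
    rw [hHcomp]; exact hFGi
  have hEFG : ∫ ω, F ω * G ω ∂μ = ∫ c, A c * B c ∂ν2 := by
    rw [← hHcomp, ← integral_map hT.aemeasurable
      (measurable_of_countable H).aestronglyMeasurable, hmapT,
      integral_prod_symm _ hHint]
    refine integral_congr_ae (Eventually.of_forall fun c => ?_)
    have := integral_prod_mul (μ := ν0) (ν := ν1)
      (fun a => max (f a) (f c)) (fun b => max (g b) (g c))
    simpa [hHdef, hAdef, hBdef] using this
  set HF : ℕ × ℕ → ℝ := fun p => max (f p.1) (f p.2) with hHFdef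
  set HG : ℕ × ℕ → ℝ := fun p => max (g p.1) (g p.2) with hHGdef
  have hHFcomp : (fun ω => HF (W 0 ω, W 2 ω)) = F := by
    funext ω; simp only [hHFdef, hFdef, hf.map_max]
  have hHGcomp : (fun ω => HG (W 1 ω, W 2 ω)) = G := by
    funext ω; simp only [hHGdef, hGdef, hg.map_max]
  have hHFint : Integrable HF (ν0.prod ν2) := by
    rw [← hmap02, integrable_map_measure (measurable_of_countable HF).aestronglyMeasurable
      ((hW 0).prodMk (hW 2)).aemeasurable]
    show Integrable (fun ω => HF (W 0 ω, W 2 ω)) μ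
    rw [hHFcomp]; exact hFi
  have hHGint : Integrable HG (ν1.prod ν2) := by
    rw [← hmap12, integrable_map_measure (measurable_of_countable HG).aestronglyMeasurable
      ((hW 1).prodMk (hW 2)).aemeasurable]
    show Integrable (fun ω => HG (W 1 ω, W 2 ω)) μ
    rw [hHGcomp]; exact hGi
  have hEF : ∫ ω, F ω ∂μ = ∫ c, A c ∂ν2 := by
    rw [← hHFcomp, ← integral_map ((hW 0).prodMk (hW 2)).aemeasurable
      (measurable_of_countable HF).aestronglyMeasurable, hmap02,
      integral_prod_symm _ hHFint]
  have hEG : ∫ ω, G ω ∂μ = ∫ c, B c ∂ν2 := by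
    rw [← hHGcomp, ← integral_map ((hW 1).prodMk (hW 2)).aemeasurable
      (measurable_of_countable HG).aestronglyMeasurable, hmap12,
      integral_prod_symm _ hHGint]
  -- integrability of A, B, A*B
  have hAi : Integrable A ν2 := by
    have := hHFint.integral_prod_right
    simpa [hHFdef, hAdef] using this
  have hBi : Integrable B ν2 := by
    have := hHGint.integral_prod_right
    simpa [hHGdef, hBdef] using this
  have hABi : Integrable (fun c => A c * B c) ν2 := by
    have h1 := hHint.integral_prod_right
    have h2 : (fun c => ∫ p, H (p, c) ∂(ν0.prod ν1)) = fun c => A c * B c := by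
      funext c
      have := integral_prod_mul (μ := ν0) (ν := ν1)
        (fun a => max (f a) (f c)) (fun b => max (g b) (g c))
      simpa [hHdef, hAdef, hBdef] using this
    rwa [h2] at h1
  -- Chebyshev via duplication
  have key : 0 ≤ ∫ c, A c * B c ∂ν2 - (∫ c, A c ∂ν2) * ∫ c, B c ∂ν2 := by
    have hone : Integrable (fun _ : ℕ => (1:ℝ)) ν2 := integrable_const 1
    have t1 : Integrable (fun p : ℕ × ℕ => A p.1 * B p.1) (ν2.prod ν2) := by
      have := hABi.mul_prod hone
      simpa using this
    have t2 : Integrable (fun p : ℕ × ℕ => A p.1 * B p.2) (ν2.prod ν2) := hAi.mul_prod hBi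
    have t3 : Integrable (fun p : ℕ × ℕ => B p.1 * A p.2) (ν2.prod ν2) := hBi.mul_prod hAi
    have t4 : Integrable (fun p : ℕ × ℕ => A p.2 * B p.2) (ν2.prod ν2) := by
      have := hone.mul_prod hABi
      simpa using this
    have u1 : Integrable (fun p : ℕ × ℕ => A p.1 * B p.1 - A p.1 * B p.2) (ν2.prod ν2) :=
      t1.sub t2
    have u2 : Integrable (fun p : ℕ × ℕ => B p.1 * A p.2 - A p.2 * B p.2) (ν2.prod ν2) :=
      t3.sub t4
    have e : (fun p : ℕ × ℕ => (A p.1 - A p.2) * (B p.1 - B p.2))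
        = fun p => (A p.1 * B p.1 - A p.1 * B p.2) - (B p.1 * A p.2 - A p.2 * B p.2) := by
      funext p; ring
    have hKnn : 0 ≤ ∫ p, (A p.1 - A p.2) * (B p.1 - B p.2) ∂(ν2.prod ν2) := by
      refine integral_nonneg fun p => ?_
      show (0:ℝ) ≤ (A p.1 - A p.2) * (B p.1 - B p.2)
      rcases le_total p.1 p.2 with h | h <;> nlinarith [hAmono h, hBmono h]
    have i1 : ∫ p, A p.1 * B p.1 ∂(ν2.prod ν2) = ∫ c, A c * B c ∂ν2 := by
      have := integral_prod_mul (μ := ν2) (ν := ν2) (fun c => A c * B c) (fun _ => (1:ℝ))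
      simpa using this
    have i2 : ∫ p, A p.1 * B p.2 ∂(ν2.prod ν2) = (∫ c, A c ∂ν2) * ∫ c, B c ∂ν2 :=
      integral_prod_mul A B
    have i3 : ∫ p, B p.1 * A p.2 ∂(ν2.prod ν2) = (∫ c, B c ∂ν2) * ∫ c, A c ∂ν2 :=
      integral_prod_mul B A
    have i4 : ∫ p, A p.2 * B p.2 ∂(ν2.prod ν2) = ∫ c, A c * B c ∂ν2 := by
      have := integral_prod_mul (μ := ν2) (ν := ν2) (fun _ => (1:ℝ)) (fun c => A c * B c)
      simpa using this
    have comp : ∫ p, (A p.1 - A p.2) * (B p.1 - B p.2) ∂(ν2.prod ν2)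
        = (∫ c, A c * B c ∂ν2 - (∫ c, A c ∂ν2) * ∫ c, B c ∂ν2)
          - ((∫ c, B c ∂ν2) * ∫ c, A c ∂ν2 - ∫ c, A c * B c ∂ν2) := by
      rw [e, integral_sub u1 u2, integral_sub t1 t2,
        integral_sub t3 t4, i1, i2, i3, i4]
    rw [comp] at hKnn
    nlinarith [hKnn, mul_comm (∫ c, B c ∂ν2) (∫ c, A c ∂ν2)]
  have final : 0 ≤ ∫ ω, F ω * G ω ∂μ - (∫ ω, F ω ∂μ) * ∫ ω, G ω ∂μ := by
    rw [hEFG, hEF, hEG]; exact key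
  exact final
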